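/- (Topological representation theorem of DCJS) Let B be a distributive contact join-semilattice. Then there exist a compact, semiregular, T₀ topological space X and a map h from B to the regular closed subsets of X such that h is injective, h(0) = ∅, h(1) = X, h(a + b) = h(a) ∪ h(b) for all a, b, a ≤ b iff h(a) ⊆ h(b), and aCb iff h(a) ∩ h(b) ≠ ∅. -/

import Mathlib

universe u
set_option linter.unusedSectionVars false
set_option linter.unusedVariables false

namespace Stmt19Aux

open Set TopologicalSpace

variable {B : Type u} [SemilatticeSup B] [OrderBot B] [OrderTop B]

/-- Ideals of the join-semilattice `B`. -/
def IsIdl (I : Set B) : Prop :=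
  ⊥ ∈ I ∧ (∀ x y : B, x ≤ y → y ∈ I → x ∈ I) ∧ ∀ x ∈ I, ∀ y ∈ I, x ⊔ y ∈ I

def dwn (b : B) : Set B := {x | x ≤ b}

@[simp] lemma mem_dwn {x b : B} : x ∈ dwn b ↔ x ≤ b := Iff.rfl

def idlJoin (I J : Set B) : Set B := {x | ∃ i ∈ I, ∃ j ∈ J, x ≤ i ⊔ j}

lemma isIdl_dwn (b : B) : IsIdl (dwn b) :=
  ⟨bot_le, fun x y hxy hy => le_trans hxy hy, fun x hx y hy => sup_le hx hy⟩

lemma isIdl_univ : IsIdl (Set.univ : Set B) :=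
  ⟨trivial, fun _ _ _ _ => trivial, fun _ _ _ _ => trivial⟩

lemma isIdl_inter {I J : Set B} (hI : IsIdl I) (hJ : IsIdl J) : IsIdl (I ∩ J) :=
  ⟨⟨hI.1, hJ.1⟩, fun x y hxy hy => ⟨hI.2.1 x y hxy hy.1, hJ.2.1 x y hxy hy.2⟩,
    fun x hx y hy => ⟨hI.2.2 x hx.1 y hy.1, hJ.2.2 x hx.2 y hy.2⟩⟩

lemma isIdl_idlJoin {I J : Set B} (hI : IsIdl I) (hJ : IsIdl J) : IsIdl (idlJoin I J) := by
  refine ⟨⟨⊥, hI.1, ⊥, hJ.1, by simp⟩, ?_, ?_⟩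
  · rintro x y hxy ⟨i, hi, j, hj, hy⟩
    exact ⟨i, hi, j, hj, le_trans hxy hy⟩
  · rintro x ⟨i, hi, j, hj, hx⟩ y ⟨i', hi', j', hj', hy⟩
    refine ⟨i ⊔ i', hI.2.2 i hi i' hi', j ⊔ j', hJ.2.2 j hj j' hj', ?_⟩
    apply sup_le
    · exact le_trans hx (sup_le_sup le_sup_left le_sup_left)
    · exact le_trans hy (sup_le_sup le_sup_right le_sup_right)

lemma subset_idlJoin_left {I J : Set B} (hJ : IsIdl J) : I ⊆ idlJoin I J :=
  fun x hx => ⟨x, hx, ⊥, hJ.1, by simp⟩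

lemma subset_idlJoin_right {I J : Set B} (hI : IsIdl I) : J ⊆ idlJoin I J :=
  fun x hx => ⟨⊥, hI.1, x, hx, by simp⟩

lemma dwn_subset_of_mem {I : Set B} (hI : IsIdl I) {a : B} (ha : a ∈ I) : dwn a ⊆ I :=
  fun x hx => hI.2.1 x a hx ha

/-- Prime filters of the lattice of ideals of `B` (flattened presentation). -/
def IsPF (p : Set (Set B)) : Prop :=
  (∀ I ∈ p, IsIdl I) ∧ Set.univ ∈ p ∧ dwn (⊥ : B) ∉ p ∧
  (∀ I J : Set B, I ∈ p → IsIdl J → I ⊆ J → J ∈ p) ∧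
  (∀ I J : Set B, I ∈ p → J ∈ p → I ∩ J ∈ p) ∧
  (∀ I J : Set B, IsIdl I → IsIdl J → idlJoin I J ∈ p → I ∈ p ∨ J ∈ p)

def Z (B : Type u) [SemilatticeSup B] [OrderBot B] [OrderTop B] : Type u :=
  {p : Set (Set B) // IsPF p}

/-- The key Zorn argument: prime filter separation in the (distributive, thanks to `had`)
lattice of ideals. -/
lemma exists_pf
    (had : ∀ x a b : B, x ≤ a ⊔ b → ∃ a' b' : B, a' ≤ a ∧ b' ≤ b ∧ x = a' ⊔ b')
    (I : Set B) (hI : IsIdl I) (a : B) (ha : a ∉ I) :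
    ∃ p : Z B, dwn a ∈ p.val ∧ I ∉ p.val := by
  classical
  set S : Set (Set (Set B)) := {q | (∀ K ∈ q, IsIdl K) ∧ dwn a ∈ q ∧
    (∀ K L : Set B, K ∈ q → IsIdl L → K ⊆ L → L ∈ q) ∧
    (∀ K L : Set B, K ∈ q → L ∈ q → K ∩ L ∈ q) ∧ (∀ K ∈ q, ¬ K ⊆ I)} with hS
  have seed : {K : Set B | IsIdl K ∧ dwn a ⊆ K} ∈ S := by
    refine ⟨fun K hK => hK.1, ⟨isIdl_dwn a, le_refl _⟩, ?_, ?_, ?_⟩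
    · exact fun K L hK hL hKL => ⟨hL, hK.2.trans hKL⟩
    · exact fun K L hK hL => ⟨isIdl_inter hK.1 hL.1, subset_inter hK.2 hL.2⟩
    · rintro K ⟨hK, haK⟩ hKI
      exact ha (hKI (haK (le_refl a)))
  have hchainS : ∀ c ⊆ S, IsChain (· ⊆ ·) c → c.Nonempty →
      ∃ ub ∈ S, ∀ s ∈ c, s ⊆ ub := by
    intro c hcS hchain hcne
    refine ⟨⋃₀ c, ?_, fun s hs => subset_sUnion_of_mem hs⟩
    obtain ⟨q0, hq0⟩ := hcne
    refine ⟨?_, ?_, ?_, ?_, ?_⟩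
    · rintro K ⟨q, hq, hKq⟩
      exact (hcS hq).1 K hKq
    · exact ⟨q0, hq0, (hcS hq0).2.1⟩
    · rintro K L ⟨q, hq, hKq⟩ hL hKL
      exact ⟨q, hq, (hcS hq).2.2.1 K L hKq hL hKL⟩
    · rintro K L ⟨q, hq, hKq⟩ ⟨q', hq', hLq'⟩
      rcases hchain.total hq hq' with h | h
      · exact ⟨q', hq', (hcS hq').2.2.2.1 K L (h hKq) hLq'⟩
      · exact ⟨q, hq, (hcS hq).2.2.2.1 K L hKq (h hLq')⟩
    · rintro K ⟨q, hq, hKq⟩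
      exact (hcS hq).2.2.2.2 K hKq
  obtain ⟨m, hm0, hmax⟩ := zorn_subset_nonempty S hchainS _ seed
  have hmS := hmax.1
  -- univ ∈ m
  have hdwna : dwn a ∈ m := hmS.2.1
  have huniv : Set.univ ∈ m := hmS.2.2.1 (dwn a) Set.univ hdwna isIdl_univ (subset_univ _)
  -- properness
  have hproper : dwn (⊥ : B) ∉ m := by
    intro hbot
    refine hmS.2.2.2.2 (dwn ⊥) hbot ?_
    intro x hx
    have : x = ⊥ := le_bot_iff.mp hx
    rw [this]; exact hI.1
  -- primeness
  have hprime : ∀ K L : Set B, IsIdl K → IsIdl L → idlJoin K L ∈ m → K ∈ m ∨ L ∈ m := by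
    intro K L hK hL hKL
    by_contra hcon
    push_neg at hcon
    obtain ⟨hKm, hLm⟩ := hcon
    -- the extension of m by an ideal W
    have key : ∀ W : Set B, IsIdl W → W ∉ m → ∃ M ∈ m, M ∩ W ⊆ I := by
      intro W hW hWm
      set mW : Set (Set B) := {V | IsIdl V ∧ ∃ M ∈ m, M ∩ W ⊆ V} with hmW
      have hsub : m ⊆ mW := by
        intro V hV
        exact ⟨hmS.1 V hV, V, hV, inter_subset_left⟩
      have hWmW : W ∈ mW := ⟨hW, Set.univ, huniv, inter_subset_right⟩
      by_contra hno
      push_neg at hno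
      have : mW ∈ S := by
        refine ⟨fun V hV => hV.1, hsub hdwna, ?_, ?_, ?_⟩
        · rintro V V' ⟨hV, M, hM, hMV⟩ hV' hVV'
          exact ⟨hV', M, hM, hMV.trans hVV'⟩
        · rintro V V' ⟨hV, M, hM, hMV⟩ ⟨hV', M', hM', hMV'⟩
          refine ⟨isIdl_inter hV hV', M ∩ M', hmS.2.2.2.1 M M' hM hM', ?_⟩
          intro x hx
          exact ⟨hMV ⟨hx.1.1, hx.2⟩, hMV' ⟨hx.1.2, hx.2⟩⟩
        · rintro V ⟨hV, M, hM, hMV⟩ hVI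
          exact hno M hM (hMV.trans hVI)
      have := hmax.2 this hsub
      exact hWm (this hWmW)
    obtain ⟨M, hM, hMK⟩ := key K hK hKm
    obtain ⟨N, hN, hNL⟩ := key L hL hLm
    have hMN : M ∩ N ∈ m := hmS.2.2.2.1 M N hM hN
    have hQ : (M ∩ N) ∩ idlJoin K L ∈ m := hmS.2.2.2.1 _ _ hMN hKL
    refine hmS.2.2.2.2 _ hQ ?_
    rintro x ⟨⟨hxM, hxN⟩, k, hk, l, hl, hx⟩
    obtain ⟨k', l', hk', hl', hxkl⟩ := had x k l hx
    have hMideal := hmS.1 M hM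
    have hNideal := hmS.1 N hN
    have hk'x : k' ≤ x := hxkl ▸ le_sup_left
    have hl'x : l' ≤ x := hxkl ▸ le_sup_right
    have hk'I : k' ∈ I := hMK ⟨hMideal.2.1 k' x hk'x hxM, hK.2.1 k' k hk' hk⟩
    have hl'I : l' ∈ I := hNL ⟨hNideal.2.1 l' x hl'x hxN, hL.2.1 l' l hl' hl⟩
    rw [hxkl]
    exact hI.2.2 k' hk'I l' hl'I
  refine ⟨⟨m, hmS.1, huniv, hproper, hmS.2.2.1, hmS.2.2.2.1, hprime⟩, hdwna, ?_⟩
  intro hIm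
  exact hmS.2.2.2.2 I hIm (le_refl _)

def EE (I : Set B) : Set (Z B) := {p | I ∈ p.val}

def eB (b : B) : Set (Z B) := {p | dwn b ∈ p.val}

lemma eB_eq_EE (b : B) : eB b = EE (B := B) (dwn b) := rfl

section WithC

variable (C : B → B → Prop)

/-- The extension of the contact relation to subsets of `Z B`. -/
def Cp (u v : Set (Z B)) : Prop :=
  ∀ I J : Set B, IsIdl I → IsIdl J → u ⊆ EE I → v ⊆ EE J → ∃ x ∈ I, ∃ y ∈ J, C x y

variable {C}
variable (h9 : ∀ a b : B, C a b → a ≠ ⊥)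
variable (h10 : ∀ a b : B, C a b → C b a)
variable (h11 : ∀ a b c : B, C a (b ⊔ c) → C a b ∨ C a c)
variable (h12 : ∀ a b b' : B, C a b → b ≤ b' → C a b')
variable (h13 : ∀ a : B, a ≠ ⊥ → C a a)
lemma cp_mono {u v u' v' : Set (Z B)} (hu : u' ⊆ u) (hv : v' ⊆ v)
    (h : Cp C u' v') : Cp C u v :=
  fun I J hI hJ huI hvJ => h I J hI hJ (hu.trans huI) (hv.trans hvJ)

include h10 in
lemma cp_symm {u v : Set (Z B)} (h : Cp C u v) : Cp C v u := by
  intro I J hI hJ hvI huJ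
  obtain ⟨x, hx, y, hy, hxy⟩ := h J I hJ hI huJ hvI
  exact ⟨y, hy, x, hx, h10 _ _ hxy⟩

include h9 in
lemma cp_empty_left {v : Set (Z B)} (h : Cp C ∅ v) : False := by
  obtain ⟨x, hx, y, hy, hxy⟩ := h (dwn ⊥) Set.univ (isIdl_dwn ⊥) isIdl_univ
    (by simp) (fun p _ => p.2.2.1)
  exact h9 x y hxy (le_bot_iff.mp hx)

include h13 in
lemma cp_of_overlap {u v : Set (Z B)} (h : (u ∩ v).Nonempty) : Cp C u v := by
  obtain ⟨p, hpu, hpv⟩ := h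
  intro I J hI hJ huI hvJ
  have hIJ : I ∩ J ∈ p.val := p.2.2.2.2.2.1 I J (huI hpu) (hvJ hpv)
  have : ¬ I ∩ J ⊆ dwn (⊥ : B) := by
    intro hsub
    exact p.2.2.2.1 (p.2.2.2.2.1 (I ∩ J) (dwn ⊥) hIJ (isIdl_dwn ⊥) hsub)
  obtain ⟨x, hxIJ, hxb⟩ := not_subset.mp this
  have hxbot : x ≠ ⊥ := fun hx => hxb (by simp [hx])
  exact ⟨x, hxIJ.1, x, hxIJ.2, h13 x hxbot⟩

include h11 h12 in
lemma cp_union_right {u v₁ v₂ : Set (Z B)} (h : Cp C u (v₁ ∪ v₂)) :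
    Cp C u v₁ ∨ Cp C u v₂ := by
  by_contra hcon
  push_neg at hcon
  obtain ⟨hc1, hc2⟩ := hcon
  simp only [Cp, not_forall] at hc1 hc2
  obtain ⟨I₁, J₁, hI₁, hJ₁, hu₁, hv₁, hn₁⟩ := hc1
  obtain ⟨I₂, J₂, hI₂, hJ₂, hu₂, hv₂, hn₂⟩ := hc2
  have hvsub : v₁ ∪ v₂ ⊆ EE (idlJoin J₁ J₂) := by
    rintro p (hp | hp)
    · exact p.2.2.2.2.1 J₁ (idlJoin J₁ J₂) (hv₁ hp) (isIdl_idlJoin hJ₁ hJ₂)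
        (subset_idlJoin_left hJ₂)
    · exact p.2.2.2.2.1 J₂ (idlJoin J₁ J₂) (hv₂ hp) (isIdl_idlJoin hJ₁ hJ₂)
        (subset_idlJoin_right hJ₁)
  obtain ⟨x, hx, y, hy, hxy⟩ := h (I₁ ∩ I₂) (idlJoin J₁ J₂) (isIdl_inter hI₁ hI₂)
    (isIdl_idlJoin hJ₁ hJ₂)
    (fun p hp => p.2.2.2.2.2.1 I₁ I₂ (hu₁ hp) (hu₂ hp))
    hvsub
  obtain ⟨j₁, hj₁, j₂, hj₂, hyj⟩ := hy
  rcases h11 x j₁ j₂ (h12 x y (j₁ ⊔ j₂) hxy hyj) with hc | hc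
  · exact hn₁ ⟨x, hx.1, j₁, hj₁, hc⟩
  · exact hn₂ ⟨x, hx.2, j₂, hj₂, hc⟩

include h10 h11 h12 in
lemma cp_union_left {u₁ u₂ v : Set (Z B)} (h : Cp C (u₁ ∪ u₂) v) :
    Cp C u₁ v ∨ Cp C u₂ v := by
  rcases cp_union_right h11 h12 (cp_symm h10 h) with hc | hc
  · exact Or.inl (cp_symm h10 hc)
  · exact Or.inr (cp_symm h10 hc)

/-- `eB` determines ideal membership. -/
lemma eB_subset_EE_iff
    (had : ∀ x a b : B, x ≤ a ⊔ b → ∃ a' b' : B, a' ≤ a ∧ b' ≤ b ∧ x = a' ⊔ b')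
    {a : B} {I : Set B} (hI : IsIdl I) : eB a ⊆ EE I ↔ a ∈ I := by
  constructor
  · intro hsub
    by_contra haI
    obtain ⟨p, hpa, hpI⟩ := exists_pf had I hI a haI
    exact hpI (hsub hpa)
  · intro haI p hp
    exact p.2.2.2.2.1 (dwn a) I hp hI (dwn_subset_of_mem hI haI)

include h10 h12 in
lemma cp_eB_iff
    (had : ∀ x a b : B, x ≤ a ⊔ b → ∃ a' b' : B, a' ≤ a ∧ b' ≤ b ∧ x = a' ⊔ b')
    {a b : B} : Cp C (eB a) (eB b) ↔ C a b := by
  constructor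
  · intro h
    obtain ⟨x, hx, y, hy, hxy⟩ := h (dwn a) (dwn b) (isIdl_dwn a) (isIdl_dwn b)
      (le_refl _) (le_refl _)
    exact h12 _ _ _ (h10 _ _ (h12 _ _ _ (h10 _ _ hxy) hx)) hy
  · intro h I J hI hJ haI hbJ
    exact ⟨a, (eB_subset_EE_iff had hI).mp haI, b, (eB_subset_EE_iff had hJ).mp hbJ, h⟩

lemma eB_bot : eB (⊥ : B) = ∅ := by
  ext p
  simp only [eB, mem_setOf_eq, mem_empty_iff_false, iff_false]
  exact p.2.2.2.1

lemma eB_top : eB (⊤ : B) = Set.univ := by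
  ext p
  simp only [eB, mem_setOf_eq, mem_univ, iff_true]
  have : dwn (⊤ : B) = Set.univ := by ext x; simp [dwn]
  rw [this]
  exact p.2.2.1

lemma eB_mono {a b : B} (hab : a ≤ b) : eB a ⊆ eB b := by
  intro p hp
  exact p.2.2.2.2.1 (dwn a) (dwn b) hp (isIdl_dwn b) (fun x hx => le_trans hx hab)

lemma eB_subset_iff
    (had : ∀ x a b : B, x ≤ a ⊔ b → ∃ a' b' : B, a' ≤ a ∧ b' ≤ b ∧ x = a' ⊔ b')
    {a b : B} : eB a ⊆ eB b ↔ a ≤ b := by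
  rw [eB_eq_EE b, eB_subset_EE_iff had (isIdl_dwn b)]
  exact Iff.rfl

lemma eB_sup (a b : B) : eB (a ⊔ b) = eB a ∪ eB b := by
  ext p
  constructor
  · intro hp
    have : dwn (a ⊔ b) = idlJoin (dwn a) (dwn b) := by
      ext x
      constructor
      · intro hx; exact ⟨a, le_refl a, b, le_refl b, hx⟩
      · rintro ⟨i, hi, j, hj, hx⟩; exact le_trans hx (sup_le_sup hi hj)
    rcases p.2.2.2.2.2.2 (dwn a) (dwn b) (isIdl_dwn a) (isIdl_dwn b) (this ▸ hp) with h | h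
    · exact Or.inl h
    · exact Or.inr h
  · rintro (hp | hp)
    · exact eB_mono le_sup_left hp
    · exact eB_mono le_sup_right hp

/-- Generic Zorn argument: build an "ultrafilter" all of whose members satisfy a
union-splitting, monotone property `Q`. -/
lemma buildUF {α : Type*} (Q : Set α → Prop)
    (Qmono : ∀ w₁ w₂ : Set α, w₁ ⊆ w₂ → Q w₁ → Q w₂)
    (Qsplit : ∀ w₁ w₂ : Set α, Q (w₁ ∪ w₂) → Q w₁ ∨ Q w₂)
    (u : Set α) (hu : Q u) :
    ∃ U : Set (Set α), u ∈ U ∧ (∀ w ∈ U, Q w) ∧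
      (∀ w w' : Set α, w ∈ U → w ⊆ w' → w' ∈ U) ∧
      (∀ w w' : Set α, w ∈ U → w' ∈ U → w ∩ w' ∈ U) ∧
      (∀ w : Set α, w ∈ U ∨ wᶜ ∈ U) := by
  classical
  set S : Set (Set (Set α)) := {F | u ∈ F ∧ (∀ w ∈ F, Q w) ∧
    (∀ w w' : Set α, w ∈ F → w ⊆ w' → w' ∈ F) ∧
    (∀ w w' : Set α, w ∈ F → w' ∈ F → w ∩ w' ∈ F)} with hS
  have seed : {w : Set α | u ⊆ w} ∈ S := by
    refine ⟨Set.Subset.refl u, fun w hw => Qmono u w hw hu, ?_, ?_⟩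
    · exact fun w w' hw hww' => hw.trans hww'
    · exact fun w w' hw hw' => subset_inter hw hw'
  have hchainS : ∀ c ⊆ S, IsChain (· ⊆ ·) c → c.Nonempty →
      ∃ ub ∈ S, ∀ s ∈ c, s ⊆ ub := by
    intro c hcS hchain hcne
    obtain ⟨q0, hq0⟩ := hcne
    refine ⟨⋃₀ c, ⟨⟨q0, hq0, (hcS hq0).1⟩, ?_, ?_, ?_⟩, fun s hs => subset_sUnion_of_mem hs⟩
    · rintro w ⟨q, hq, hwq⟩
      exact (hcS hq).2.1 w hwq
    · rintro w w' ⟨q, hq, hwq⟩ hww'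
      exact ⟨q, hq, (hcS hq).2.2.1 w w' hwq hww'⟩
    · rintro w w' ⟨q, hq, hwq⟩ ⟨q', hq', hwq'⟩
      rcases hchain.total hq hq' with hle | hle
      · exact ⟨q', hq', (hcS hq').2.2.2 w w' (hle hwq) hwq'⟩
      · exact ⟨q, hq, (hcS hq).2.2.2 w w' hwq (hle hwq')⟩
  obtain ⟨m, hm0, hmax⟩ := zorn_subset_nonempty S hchainS _ seed
  have hmS := hmax.1
  refine ⟨m, hmS.1, hmS.2.1, hmS.2.2.1, hmS.2.2.2, ?_⟩
  intro x
  by_contra hcon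
  push_neg at hcon
  obtain ⟨hx, hxc⟩ := hcon
  have key : ∀ W : Set α, W ∉ m → ∃ s ∈ m, ¬ Q (s ∩ W) := by
    intro W hW
    set mW : Set (Set α) := {w | ∃ s ∈ m, s ∩ W ⊆ w} with hmW
    have hsub : m ⊆ mW := fun w hw => ⟨w, hw, inter_subset_left⟩
    have hWmW : W ∈ mW := ⟨u, hmS.1, inter_subset_right⟩
    by_contra hno
    push_neg at hno
    have hmWS : mW ∈ S := by
      refine ⟨hsub hmS.1, ?_, ?_, ?_⟩
      · rintro w ⟨s, hs, hsw⟩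
        exact Qmono _ _ hsw (hno s hs)
      · rintro w w' ⟨s, hs, hsw⟩ hww'
        exact ⟨s, hs, hsw.trans hww'⟩
      · rintro w w' ⟨s, hs, hsw⟩ ⟨s', hs', hsw'⟩
        refine ⟨s ∩ s', hmS.2.2.2 s s' hs hs', ?_⟩
        intro z hz
        exact ⟨hsw ⟨hz.1.1, hz.2⟩, hsw' ⟨hz.1.2, hz.2⟩⟩
    exact hW (hmax.2 hmWS hsub hWmW)
  obtain ⟨s, hs, hsx⟩ := key x hx
  obtain ⟨t, ht, htx⟩ := key xᶜ hxc
  have hst : s ∩ t ∈ m := hmS.2.2.2 s t hs ht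
  have hQst : Q (s ∩ t) := hmS.2.1 _ hst
  have hsplit : s ∩ t ⊆ (s ∩ x) ∪ (t ∩ xᶜ) := by
    intro z hz
    by_cases hzx : z ∈ x
    · exact Or.inl ⟨hz.1, hzx⟩
    · exact Or.inr ⟨hz.2, hzx⟩
  rcases Qsplit _ _ (Qmono _ _ hsplit hQst) with hq | hq
  · exact hsx hq
  · exact htx hq

variable (C) in
/-- Clans of the contact structure on `Set (Z B)`. -/
def IsClan (Γ : Set (Set (Z B))) : Prop :=
  Set.univ ∈ Γ ∧ (∀ u v : Set (Z B), u ∈ Γ → u ⊆ v → v ∈ Γ) ∧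
  (∀ u v : Set (Z B), u ∪ v ∈ Γ → u ∈ Γ ∨ v ∈ Γ) ∧
  ∀ u v : Set (Z B), u ∈ Γ → v ∈ Γ → Cp C u v

include h13 in
/-- Principal clans coming from a single point. -/
lemma isClan_principal (z : Z B) : IsClan C {w : Set (Z B) | z ∈ w} := by
  refine ⟨trivial, fun u v hu huv => huv hu, fun u v huv => huv, ?_⟩
  intro u v hu hv
  exact cp_of_overlap h13 ⟨z, hu, hv⟩

include h9 h10 h11 h12 h13 in
/-- Key lemma: a contact pair extends to a clan. -/
lemma exists_clan_pair {u v : Set (Z B)} (huv : Cp C u v) :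
    ∃ Γ : Set (Set (Z B)), IsClan C Γ ∧ u ∈ Γ ∧ v ∈ Γ := by
  obtain ⟨U, hUu, hUQ, hUup, hUint, hUult⟩ := buildUF (fun w => Cp C w v)
    (fun w₁ w₂ hw h => cp_mono hw (le_refl _) h)
    (fun w₁ w₂ h => cp_union_left h10 h11 h12 h) u huv
  have hsplit2 : ∀ w₁ w₂ : Set (Z B), (∀ s ∈ U, Cp C s (w₁ ∪ w₂)) →
      (∀ s ∈ U, Cp C s w₁) ∨ (∀ s ∈ U, Cp C s w₂) := by
    intro w₁ w₂ h
    by_contra hcon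
    push_neg at hcon
    obtain ⟨⟨s₁, hs₁, hn₁⟩, s₂, hs₂, hn₂⟩ := hcon
    have hs : s₁ ∩ s₂ ∈ U := hUint s₁ s₂ hs₁ hs₂
    rcases cp_union_right h11 h12 (h _ hs) with hc | hc
    · exact hn₁ (cp_mono inter_subset_left (le_refl _) hc)
    · exact hn₂ (cp_mono inter_subset_right (le_refl _) hc)
  obtain ⟨V, hVv, hVQ, hVup, hVint, hVult⟩ := buildUF (fun w => ∀ s ∈ U, Cp C s w)
    (fun w₁ w₂ hw h s hsU => cp_mono (le_refl _) hw (h s hsU))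
    hsplit2 v (fun s hsU => hUQ s hsU)
  have hUne : ∅ ∉ U := fun h => cp_empty_left h9 (hUQ ∅ h)
  have hVne : ∅ ∉ V := fun h => cp_empty_left h9 (cp_symm h10 (hVQ ∅ h u hUu))
  refine ⟨U ∪ V, ⟨?_, ?_, ?_, ?_⟩, Or.inl hUu, Or.inr hVv⟩
  · exact Or.inl (hUup u Set.univ hUu (subset_univ _))
  · rintro w w' (hw | hw) hww'
    · exact Or.inl (hUup w w' hw hww')
    · exact Or.inr (hVup w w' hw hww')
  · have prime : ∀ (W : Set (Set (Z B))), (∀ a b : Set (Z B), a ∈ W → b ∈ W → a ∩ b ∈ W) →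
        (∀ a b : Set (Z B), a ∈ W → a ⊆ b → b ∈ W) → (∀ a : Set (Z B), a ∈ W ∨ aᶜ ∈ W) →
        ∀ a b : Set (Z B), a ∪ b ∈ W → a ∈ W ∨ b ∈ W := by
      intro W hint hup hult a b hab
      rcases hult a with ha | ha
      · exact Or.inl ha
      · refine Or.inr (hup _ _ (hint _ _ hab ha) ?_)
        rintro z ⟨hz1 | hz1, hz2⟩
        · exact absurd hz1 hz2
        · exact hz1
    rintro w w' (hww' | hww')
    · rcases prime U hUint hUup hUult w w' hww' with h | h
      · exact Or.inl (Or.inl h)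
      · exact Or.inr (Or.inl h)
    · rcases prime V hVint hVup hVult w w' hww' with h | h
      · exact Or.inl (Or.inr h)
      · exact Or.inr (Or.inr h)
  · rintro w w' (hw | hw) (hw' | hw')
    · have : w ∩ w' ∈ U := hUint w w' hw hw'
      have hne : (w ∩ w').Nonempty := by
        rcases eq_empty_or_nonempty (w ∩ w') with h | h
        · exact absurd (h ▸ this) hUne
        · exact h
      exact cp_of_overlap h13 hne
    · exact hVQ w' hw' w hw
    · exact cp_symm h10 (hVQ w hw w' hw')
    · have : w ∩ w' ∈ V := hVint w w' hw hw'
      have hne : (w ∩ w').Nonempty := by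
        rcases eq_empty_or_nonempty (w ∩ w') with h | h
        · exact absurd (h ▸ this) hVne
        · exact h
      exact cp_of_overlap h13 hne

variable (C) in
/-- The representation space: clans. -/
def XX : Type u := {Γ : Set (Set (Z B)) // IsClan C Γ}

variable (C) in
def hA (u : Set (Z B)) : Set (XX C) := {Γ | u ∈ Γ.val}

variable (C) in
def Bas : Set (Set (XX C)) := {s | ∃ u : Set (Z B), s = (hA C u)ᶜ}

variable (C) in
instance instTopXX : TopologicalSpace (XX C) := generateFrom (Bas C)

lemma hA_univ : hA C Set.univ = Set.univ := by
  ext Γ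
  simp only [hA, mem_setOf_eq, mem_univ, iff_true]
  exact Γ.2.1

include h9 in
lemma hA_empty : hA C (∅ : Set (Z B)) = ∅ := by
  ext Γ
  simp only [hA, mem_setOf_eq, mem_empty_iff_false, iff_false]
  intro h
  exact cp_empty_left h9 (Γ.2.2.2.2 ∅ ∅ h h)

lemma hA_mono {u v : Set (Z B)} (huv : u ⊆ v) : hA C u ⊆ hA C v :=
  fun Γ hΓ => Γ.2.2.1 u v hΓ huv

lemma hA_union (u v : Set (Z B)) : hA C (u ∪ v) = hA C u ∪ hA C v := by
  ext Γ
  constructor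
  · intro h
    exact Γ.2.2.2.1 u v h
  · rintro (h | h)
    · exact Γ.2.2.1 u (u ∪ v) h subset_union_left
    · exact Γ.2.2.1 v (u ∪ v) h subset_union_right

include h13 in
lemma hA_subset_iff {u v : Set (Z B)} : hA C u ⊆ hA C v ↔ u ⊆ v := by
  constructor
  · intro h z hz
    have hz' : (⟨{w | z ∈ w}, isClan_principal h13 z⟩ : XX C) ∈ hA C u := hz
    exact h hz'
  · exact hA_mono

include h9 in
lemma basisXX : IsTopologicalBasis (Bas C) := by
  refine ⟨?_, ?_, rfl⟩
  · rintro t₁ ⟨u₁, rfl⟩ t₂ ⟨u₂, rfl⟩ Γ hΓ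
    refine ⟨(hA C (u₁ ∪ u₂))ᶜ, ⟨u₁ ∪ u₂, rfl⟩, ?_, ?_⟩
    · rw [hA_union, compl_union]
      exact hΓ
    · rw [hA_union, compl_union]
  · apply eq_univ_of_univ_subset
    intro Γ _
    exact ⟨(hA C (∅ : Set (Z B)))ᶜ, ⟨∅, rfl⟩, by rw [hA_empty h9]; simp⟩

include h9 in
lemma isClosed_hA (u : Set (Z B)) : IsClosed (hA C u) :=
  ⟨(basisXX h9).isOpen ⟨u, rfl⟩⟩

lemma compl_hA_subset (u : Set (Z B)) : (hA C uᶜ)ᶜ ⊆ hA C u := by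
  intro Γ hΓ
  have huniv : u ∪ uᶜ ∈ Γ.val := by
    rw [union_compl_self]
    exact Γ.2.1
  rcases Γ.2.2.2.1 u uᶜ huniv with h | h
  · exact h
  · exact absurd h hΓ

include h9 h13 in
lemma interior_hA (u : Set (Z B)) : interior (hA C u) = (hA C uᶜ)ᶜ := by
  apply Subset.antisymm
  · intro Γ hΓ
    obtain ⟨t, ⟨w, rfl⟩, hΓt, htu⟩ := (basisXX h9).exists_subset_of_mem_open hΓ isOpen_interior
    have htu' : (hA C w)ᶜ ⊆ hA C u := htu.trans interior_subset
    have hwc : uᶜ ⊆ w := by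
      intro z hz
      by_contra hzw
      have : (⟨{s | z ∈ s}, isClan_principal h13 z⟩ : XX C) ∈ (hA C w)ᶜ := hzw
      exact hz (htu' this)
    intro hΓu
    exact hΓt (Γ.2.2.1 uᶜ w hΓu hwc)
  · have hopen : IsOpen ((hA C uᶜ)ᶜ) := (basisXX h9).isOpen ⟨uᶜ, rfl⟩
    rw [← hopen.interior_eq]
    exact interior_mono (compl_hA_subset u)

include h9 h13 in
lemma closure_compl_hA (u : Set (Z B)) : closure ((hA C uᶜ)ᶜ) = hA C u := by
  apply Subset.antisymm
  · exact closure_minimal (compl_hA_subset u) (isClosed_hA h9 u)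
  · intro Γ hΓ
    rw [(basisXX h9).mem_closure_iff]
    rintro t ⟨w, rfl⟩ hΓt
    have hnsub : ¬ u ⊆ w := fun hsub => hΓt (Γ.2.2.1 u w hΓ hsub)
    obtain ⟨z, hzu, hzw⟩ := not_subset.mp hnsub
    refine ⟨⟨{s | z ∈ s}, isClan_principal h13 z⟩, hzw, ?_⟩
    simp only [hA, mem_compl_iff, mem_setOf_eq]
    exact fun h => h hzu

include h9 h13 in
lemma hA_regClosed (u : Set (Z B)) : hA C u = closure (interior (hA C u)) := by
  rw [interior_hA h9 h13, closure_compl_hA h9 h13]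

include h9 h13 in
lemma basis_regOpen :
    IsTopologicalBasis {v : Set (XX C) | v = interior (closure v)} := by
  apply isTopologicalBasis_of_isOpen_of_nhds
  · rintro v hv
    rw [hv]
    exact isOpen_interior
  · intro Γ s hΓs hs
    obtain ⟨t, ⟨w, rfl⟩, hΓt, hts⟩ := (basisXX h9).exists_subset_of_mem_open hΓs hs
    refine ⟨(hA C w)ᶜ, ?_, hΓt, hts⟩
    show (hA C w)ᶜ = interior (closure (hA C w)ᶜ)
    have h2 : closure ((hA C w)ᶜ) = hA C wᶜ := by
      have h3 := closure_compl_hA h9 h13 (u := wᶜ) (C := C)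
      rwa [compl_compl] at h3
    rw [h2, interior_hA h9 h13, compl_compl]

include h9 in
lemma t0XX : T0Space (XX C) := by
  refine (t0Space_iff_inseparable (XX C)).mpr ?_
  intro Γ Δ h
  apply Subtype.ext
  ext u
  exact h.mem_closed_iff (isClosed_hA h9 u)

lemma compactXX : CompactSpace (XX C) := by
  classical
  set K : Set (Set (Z B) → Bool) := {φ | φ Set.univ = true ∧
    (∀ u v : Set (Z B), u ⊆ v → φ u = true → φ v = true) ∧
    (∀ u v : Set (Z B), φ (u ∪ v) = true → φ u = true ∨ φ v = true) ∧
    (∀ u v : Set (Z B), φ u = true → φ v = true → Cp C u v)} with hK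
  have hcoord : ∀ (u : Set (Z B)) (b : Bool),
      IsClosed {φ : Set (Z B) → Bool | φ u = b} := by
    intro u b
    have e : {φ : Set (Z B) → Bool | φ u = b} =
        (fun φ : Set (Z B) → Bool => φ u) ⁻¹' {b} := rfl
    rw [e]
    exact (isClosed_discrete _).preimage (continuous_apply u)
  have hKclosed : IsClosed K := by
    have c1 : IsClosed {φ : Set (Z B) → Bool | φ Set.univ = true} := hcoord _ true
    have c2 : IsClosed {φ : Set (Z B) → Bool |
        ∀ u v : Set (Z B), u ⊆ v → φ u = true → φ v = true} := by
      have e : {φ : Set (Z B) → Bool | ∀ u v : Set (Z B), u ⊆ v → φ u = true → φ v = true} =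
          ⋂ (u : Set (Z B)) (v : Set (Z B)), {φ | u ⊆ v → φ u = true → φ v = true} := by
        ext φ; simp only [mem_setOf_eq, mem_iInter]
      rw [e]
      refine isClosed_iInter fun u => isClosed_iInter fun v => ?_
      by_cases huv : u ⊆ v
      · have e2 : {φ : Set (Z B) → Bool | u ⊆ v → φ u = true → φ v = true} =
            {φ | φ u = false} ∪ {φ | φ v = true} := by
          ext φ; cases hφ : φ u <;> simp [hφ, huv]
        rw [e2]; exact (hcoord u false).union (hcoord v true)
      · have e2 : {φ : Set (Z B) → Bool | u ⊆ v → φ u = true → φ v = true} = Set.univ := by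
          ext φ; simp [huv]
        rw [e2]; exact isClosed_univ
    have c3 : IsClosed {φ : Set (Z B) → Bool |
        ∀ u v : Set (Z B), φ (u ∪ v) = true → φ u = true ∨ φ v = true} := by
      have e : {φ : Set (Z B) → Bool |
          ∀ u v : Set (Z B), φ (u ∪ v) = true → φ u = true ∨ φ v = true} =
          ⋂ (u : Set (Z B)) (v : Set (Z B)),
            {φ | φ (u ∪ v) = true → φ u = true ∨ φ v = true} := by
        ext φ; simp only [mem_setOf_eq, mem_iInter]
      rw [e]
      refine isClosed_iInter fun u => isClosed_iInter fun v => ?_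
      have e2 : {φ : Set (Z B) → Bool | φ (u ∪ v) = true → φ u = true ∨ φ v = true} =
          {φ | φ (u ∪ v) = false} ∪ ({φ | φ u = true} ∪ {φ | φ v = true}) := by
        ext φ; cases hφ : φ (u ∪ v) <;> simp [hφ]
      rw [e2]
      exact (hcoord _ false).union ((hcoord u true).union (hcoord v true))
    have c4 : IsClosed {φ : Set (Z B) → Bool |
        ∀ u v : Set (Z B), φ u = true → φ v = true → Cp C u v} := by
      have e : {φ : Set (Z B) → Bool | ∀ u v : Set (Z B), φ u = true → φ v = true → Cp C u v} =
          ⋂ (u : Set (Z B)) (v : Set (Z B)), {φ | φ u = true → φ v = true → Cp C u v} := by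
        ext φ; simp only [mem_setOf_eq, mem_iInter]
      rw [e]
      refine isClosed_iInter fun u => isClosed_iInter fun v => ?_
      by_cases hC : Cp C u v
      · have e2 : {φ : Set (Z B) → Bool | φ u = true → φ v = true → Cp C u v} = Set.univ := by
          ext φ; simp [hC]
        rw [e2]; exact isClosed_univ
      · have e2 : {φ : Set (Z B) → Bool | φ u = true → φ v = true → Cp C u v} =
            {φ | φ u = false} ∪ {φ | φ v = false} := by
          ext φ; cases hφu : φ u <;> cases hφv : φ v <;> simp [hφu, hφv, hC]
        rw [e2]; exact (hcoord u false).union (hcoord v false)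
    have e : K = {φ : Set (Z B) → Bool | φ Set.univ = true} ∩
        ({φ : Set (Z B) → Bool | ∀ u v : Set (Z B), u ⊆ v → φ u = true → φ v = true} ∩
         ({φ : Set (Z B) → Bool | ∀ u v : Set (Z B), φ (u ∪ v) = true → φ u = true ∨ φ v = true} ∩
          {φ : Set (Z B) → Bool | ∀ u v : Set (Z B), φ u = true → φ v = true → Cp C u v})) := rfl
    rw [e]
    exact c1.inter (c2.inter (c3.inter c4))
  have hKcompact : IsCompact K := hKclosed.isCompact
  have hFclan : ∀ φ ∈ K, IsClan C {u : Set (Z B) | φ u = true} := by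
    rintro φ ⟨hφ1, hφ2, hφ3, hφ4⟩
    exact ⟨hφ1, fun u v hu huv => hφ2 u v huv hu, hφ3, hφ4⟩
  let G : K → XX C := fun φ => ⟨{u : Set (Z B) | φ.val u = true}, hFclan φ.val φ.2⟩
  have hGcont : Continuous G := by
    apply continuous_generateFrom_iff.mpr
    rintro s ⟨u, rfl⟩
    have e : G ⁻¹' (hA C u)ᶜ = Subtype.val ⁻¹' {φ : Set (Z B) → Bool | φ u = false} := by
      ext φ
      simp only [G, hA, mem_preimage, mem_compl_iff, mem_setOf_eq, Bool.not_eq_true]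
      change ¬ (φ.val u = true) ↔ φ.val u = false
      simp
    rw [e]
    have ho : IsOpen {φ : Set (Z B) → Bool | φ u = false} := by
      have e2 : {φ : Set (Z B) → Bool | φ u = false} =
          (fun φ : Set (Z B) → Bool => φ u) ⁻¹' {false} := rfl
      rw [e2]
      exact (isOpen_discrete _).preimage (continuous_apply u)
    exact ho.preimage continuous_subtype_val
  have hGsurj : Function.Surjective G := by
    intro Γ
    refine ⟨⟨fun u => decide (u ∈ Γ.val), ?_, ?_, ?_, ?_⟩, ?_⟩
    · simp only [decide_eq_true_eq]
      exact Γ.2.1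
    · intro u v huv hu
      simp only [decide_eq_true_eq] at *
      exact Γ.2.2.1 u v hu huv
    · intro u v h
      simp only [decide_eq_true_eq] at *
      exact Γ.2.2.2.1 u v h
    · intro u v hu hv
      simp only [decide_eq_true_eq] at *
      exact Γ.2.2.2.2 u v hu hv
    · apply Subtype.ext
      ext u
      simp [G]
  have hcs : CompactSpace K := isCompact_iff_compactSpace.mp hKcompact
  refine ⟨?_⟩
  rw [← Set.range_eq_univ.mpr hGsurj]
  exact isCompact_range hGcont

end WithC

end Stmt19Aux

open Stmt19Aux in
/-- Topological representation theorem of DCJS: every distributive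
contact join-semilattice embeds isomorphically into the regular closed subsets
of some compact, semiregular, T₀ topological space, with contact given by
nonempty intersection. Semiregularity means that the regular open sets
(`u = interior (closure u)`) form a base of the topology. -/
theorem stmt_19 {B : Type u} [SemilatticeSup B] [OrderBot B] [OrderTop B]
    (C : B → B → Prop)
    (h9 : ∀ a b : B, C a b → a ≠ ⊥)
    (h10 : ∀ a b : B, C a b → C b a)
    (h11 : ∀ a b c : B, C a (b ⊔ c) → C a b ∨ C a c)
    (h12 : ∀ a b b' : B, C a b → b ≤ b' → C a b')
    (h13 : ∀ a : B, a ≠ ⊥ → C a a)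
    (had : ∀ x a b : B, x ≤ a ⊔ b → ∃ a' b' : B, a' ≤ a ∧ b' ≤ b ∧ x = a' ⊔ b') :
    ∃ (X : Type u) (_ : TopologicalSpace X),
      CompactSpace X ∧ T0Space X ∧
      TopologicalSpace.IsTopologicalBasis {v : Set X | v = interior (closure v)} ∧
      ∃ h : B → Set X,
        (∀ a : B, h a = closure (interior (h a))) ∧
        Function.Injective h ∧
        h ⊥ = ∅ ∧ h ⊤ = Set.univ ∧
        (∀ a b : B, h (a ⊔ b) = h a ∪ h b) ∧
        (∀ a b : B, a ≤ b ↔ h a ⊆ h b) ∧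
        (∀ a b : B, C a b ↔ (h a ∩ h b).Nonempty) := by
  classical
  have horder : ∀ a b : B, a ≤ b ↔ hA C (eB a) ⊆ hA C (eB b) := by
    intro a b
    rw [hA_subset_iff h13, eB_subset_iff had]
  refine ⟨XX C, inferInstance, compactXX, t0XX h9, basis_regOpen h9 h13,
    fun b => hA C (eB b), fun a => hA_regClosed h9 h13 (eB a), ?_, ?_, ?_, ?_, horder, ?_⟩
  · intro a b hab
    exact le_antisymm ((horder a b).mpr (le_of_eq hab)) ((horder b a).mpr (le_of_eq hab.symm))
  · show hA C (eB (⊥ : B)) = ∅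
    rw [eB_bot, hA_empty h9]
  · show hA C (eB (⊤ : B)) = Set.univ
    rw [eB_top, hA_univ]
  · intro a b
    show hA C (eB (a ⊔ b)) = hA C (eB a) ∪ hA C (eB b)
    rw [eB_sup, hA_union]
  · intro a b
    constructor
    · intro hC
      obtain ⟨Γ, hΓ, ha, hb⟩ := exists_clan_pair h9 h10 h11 h12 h13
        ((cp_eB_iff h10 h12 had).mpr hC)
      exact ⟨⟨Γ, hΓ⟩, ha, hb⟩
    · rintro ⟨Γ, ha, hb⟩
      exact (cp_eB_iff h10 h12 had).mp (Γ.2.2.2.2 _ _ ha hb)
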